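/- arXiv:1506.06610 — 2 statements merged into one kernel-verified Lean document; each statement's English description precedes it below -/
import Mathlib

section
/- For q = 3 and for every integer q > 6, the inequality √(1/3 − 2/π² − 1/(3q²)) < max{1/q, (q−2)/(2q)} holds. -/
/-- For `q = 3` and every integer `q > 6`, the `L²` bound `√(1/3 − 2/π² − 1/(3q²))`
is strictly smaller than the `L^∞` centerpoint constant `max {1/q, (q−2)/(2q)}`. -/
theorem l2_lt_linfty (q : ℕ) (hq : q = 3 ∨ 6 < q) :
    Real.sqrt (1 / 3 - 2 / Real.pi ^ 2 - 1 / (3 * (q : ℝ) ^ 2)) <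
      max (1 / (q : ℝ)) (((q : ℝ) - 2) / (2 * (q : ℝ))) := by
  have hπ : (3.141592 : ℝ) < Real.pi := Real.pi_gt_d6
  have hπ' : Real.pi < 3.141593 := Real.pi_lt_d6
  have hπpos := Real.pi_pos
  have hπ2 : Real.pi ^ 2 < 9.8697 := by nlinarith
  have hπ2' : (9 : ℝ) < Real.pi ^ 2 := by nlinarith
  rcases hq with rfl | hq
  · have h13 : max (1 / ((3:ℕ) : ℝ)) ((((3:ℕ) : ℝ) - 2) / (2 * ((3:ℕ) : ℝ))) = 1/3 := by
      norm_num
    rw [h13, show (((3:ℕ):ℝ)) = 3 by norm_num]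
    rw [Real.sqrt_lt' (by norm_num)]
    have h2 : (5:ℝ)/27 < 2 / Real.pi ^ 2 := by
      rw [div_lt_div_iff₀ (by norm_num) (by positivity)]
      nlinarith
    nlinarith
  · have hx : (7 : ℝ) ≤ (q : ℝ) := by exact_mod_cast hq
    set x : ℝ := (q : ℝ) with hxdef
    have hx0 : (0:ℝ) < x := by linarith
    have hmax : max (1 / x) ((x - 2) / (2 * x)) = (x - 2) / (2 * x) := by
      rw [max_eq_right]
      rw [div_le_div_iff₀ (by linarith) (by linarith)]
      nlinarith
    rw [hmax, Real.sqrt_lt' (div_pos (by linarith) (by linarith))]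
    have hA : (0:ℝ) < x^2 + 12*x - 16 := by nlinarith
    have h2 : (x^2 + 12*x - 16) / (12*x^2) < 2 / Real.pi ^ 2 := by
      rw [div_lt_div_iff₀ (by positivity) (by positivity)]
      nlinarith [sq_nonneg (x - 7), mul_le_mul_of_nonneg_left hπ2.le hA.le]
    have hEq : ((x-2)/(2*x))^2 = 1/3 - (x^2 + 12*x - 16)/(12*x^2) - 1/(3*x^2) := by
      field_simp
      ring
    rw [hEq]
    linarith
end

section
/- For any finite absolutely continuous Borel measure μ on ℝ² (with C^∞ density of connected compact support), there exists a regular 6-fan — three concurrent lines with successive angles π/3 — each of whose three lines bisects μ. -/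
open MeasureTheory Real RealInnerProductSpace

namespace SixFanAux

open Filter Topology Set

noncomputable section

abbrev E2 := EuclideanSpace ℝ (Fin 2)

/-- The dot product with the unit vector at angle `θ`. -/
def dotA (θ : ℝ) (p : E2) : ℝ := Real.cos θ * p 0 + Real.sin θ * p 1

/-- The unit vector at angle `θ`. -/
def vecA (θ : ℝ) : E2 := (WithLp.equiv 2 (Fin 2 → ℝ)).symm ![Real.cos θ, Real.sin θ]

lemma inner_vecA (θ : ℝ) (p : E2) : ⟪vecA θ, p⟫ = dotA θ p := by
  simp [vecA, dotA, PiLp.inner_apply, Fin.sum_univ_two, WithLp.equiv_symm_apply, PiLp.toLp_apply, mul_comm]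

lemma continuous_dotA (θ : ℝ) : Continuous (dotA θ) := by
  unfold dotA; fun_prop

lemma measurableSet_le' (θ t : ℝ) : MeasurableSet {p : E2 | dotA θ p ≤ t} :=
  measurableSet_le (continuous_dotA θ).measurable measurable_const

lemma measurableSet_ge' (θ t : ℝ) : MeasurableSet {p : E2 | t ≤ dotA θ p} :=
  measurableSet_le measurable_const (continuous_dotA θ).measurable

lemma dotA_add_pi (θ : ℝ) (p : E2) : dotA (θ + π) p = - dotA θ p := by
  simp [dotA, Real.cos_add_pi, Real.sin_add_pi]; ring

lemma dotA_sub_smul (θ t : ℝ) (p : E2) : dotA θ (p - t • vecA θ) = dotA θ p - t := by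
  simp [dotA, vecA, WithLp.equiv_symm_apply, PiLp.toLp_apply, PiLp.sub_apply, PiLp.smul_apply, smul_eq_mul]
  linear_combination (-t) * Real.sin_sq_add_cos_sq θ

lemma dotA_smul_vecA (θ t : ℝ) : dotA θ (t • vecA θ) = t := by
  simp [dotA, vecA, WithLp.equiv_symm_apply, PiLp.toLp_apply, PiLp.smul_apply, smul_eq_mul]
  linear_combination t * Real.sin_sq_add_cos_sq θ

lemma norm_vecA (θ : ℝ) : ‖vecA θ‖ = 1 := by
  rw [EuclideanSpace.norm_eq]
  simp only [vecA, WithLp.equiv_symm_apply, PiLp.toLp_apply, Fin.sum_univ_two, sq_abs,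
    Matrix.cons_val_zero, Matrix.cons_val_one, Matrix.head_cons, Real.norm_eq_abs]
  rw [show Real.cos θ ^ 2 + Real.sin θ ^ 2 = 1 by
    rw [← Real.sin_sq_add_cos_sq θ]; ring]
  exact Real.sqrt_one

lemma abs_dotA_le (θ : ℝ) (p : E2) : |dotA θ p| ≤ ‖p‖ := by
  rw [← inner_vecA]
  calc |⟪vecA θ, p⟫| ≤ ‖vecA θ‖ * ‖p‖ := abs_real_inner_le_norm _ _
  _ = ‖p‖ := by rw [norm_vecA, one_mul]

lemma lineNull (θ t : ℝ) : (volume : Measure E2) {p | dotA θ p = t} = 0 := by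
  set f : E2 →ₗ[ℝ] ℝ := innerₗ E2 (vecA θ) with hf
  have hfd : ∀ p, f p = dotA θ p := fun p => inner_vecA θ p
  set s : AffineSubspace ℝ E2 := AffineSubspace.mk' (t • vecA θ) (LinearMap.ker f) with hs
  have hcar : {p : E2 | dotA θ p = t} = (s : Set E2) := by
    ext p
    simp only [mem_setOf_eq, hs, AffineSubspace.mem_coe, AffineSubspace.mem_mk',
      LinearMap.mem_ker, vsub_eq_sub, hfd, dotA_sub_smul]
    constructor <;> intro h <;> linarith
  rw [hcar]
  refine Measure.addHaar_affineSubspace _ s (fun htop => ?_)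
  have hmem : vecA θ + t • vecA θ ∈ s := htop ▸ AffineSubspace.mem_top ℝ E2 _
  rw [hs, AffineSubspace.mem_mk'] at hmem
  simp only [vsub_eq_sub, add_sub_cancel_right, LinearMap.mem_ker, hfd] at hmem
  rw [show vecA θ = (1:ℝ) • vecA θ by simp, dotA_smul_vecA] at hmem
  exact one_ne_zero hmem

lemma lineNull' {m : Measure E2} (hm : m ≪ volume) (θ t : ℝ) :
    m {p | dotA θ p = t} = 0 := hm (lineNull θ t)

/-- Key continuity: measures of halfplanes depend continuously on the data. -/
lemma tendsto_halfplane {ι : Type*} {l : Filter ι} [l.IsCountablyGenerated]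
    (m : Measure E2) [IsFiniteMeasure m] (hm : m ≪ volume)
    {θs ts : ι → ℝ} {θ t : ℝ} (hθ : Tendsto θs l (𝓝 θ)) (ht : Tendsto ts l (𝓝 t)) :
    Tendsto (fun i => m {p | dotA (θs i) p ≤ ts i}) l (𝓝 (m {p | dotA θ p ≤ t})) := by
  have hnull : m {p | dotA θ p = t} = 0 := lineNull' hm θ t
  have hae : ∀ᵐ x ∂m, dotA θ x ≠ t := by
    rw [ae_iff]; simpa using hnull
  refine tendsto_measure_of_ae_tendsto_indicator_of_isFiniteMeasure l (measurableSet_le' θ t)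
    (fun i => measurableSet_le' _ _) ?_
  filter_upwards [hae] with x hx
  have h1 : Tendsto (fun i => Real.cos (θs i)) l (𝓝 (Real.cos θ)) :=
    (Real.continuous_cos.tendsto θ).comp hθ
  have h2 : Tendsto (fun i => Real.sin (θs i)) l (𝓝 (Real.sin θ)) :=
    (Real.continuous_sin.tendsto θ).comp hθ
  have hd : Tendsto (fun i => dotA (θs i) x - ts i) l (𝓝 (dotA θ x - t)) := by
    simp only [dotA]
    exact ((h1.mul tendsto_const_nhds).add (h2.mul tendsto_const_nhds)).sub ht
  rcases lt_or_gt_of_ne (sub_ne_zero.mpr hx) with hlt | hgt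
  · filter_upwards [hd.eventually_lt_const hlt] with i hi
    exact iff_of_true (show dotA (θs i) x ≤ ts i by linarith)
      (show dotA θ x ≤ t by linarith)
  · filter_upwards [hd.eventually_const_lt hgt] with i hi
    exact iff_of_false (show ¬ dotA (θs i) x ≤ ts i by intro h; linarith)
      (show ¬ dotA θ x ≤ t by intro h; linarith)

lemma tendsto_halfplane_ge {ι : Type*} {l : Filter ι} [l.IsCountablyGenerated]
    (m : Measure E2) [IsFiniteMeasure m] (hm : m ≪ volume)
    {θs ts : ι → ℝ} {θ t : ℝ} (hθ : Tendsto θs l (𝓝 θ)) (ht : Tendsto ts l (𝓝 t)) :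
    Tendsto (fun i => m {p | ts i ≤ dotA (θs i) p}) l (𝓝 (m {p | t ≤ dotA θ p})) := by
  have hset : ∀ (a b : ℝ), {p : E2 | b ≤ dotA a p} = {p | dotA (a + π) p ≤ -b} := by
    intro a b; ext p
    simp only [mem_setOf_eq, dotA_add_pi]
    constructor <;> intro h <;> linarith
  simp only [hset]
  exact tendsto_halfplane m hm (hθ.add_const π) ht.neg

/-- The complementary halfplane has complementary measure. -/
lemma measure_ge_add_le (m : Measure E2) [IsFiniteMeasure m] (hm : m ≪ volume) (θ t : ℝ) :
    m {p | dotA θ p ≤ t} + m {p | t ≤ dotA θ p} = m univ := by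
  have hu : {p : E2 | dotA θ p ≤ t} ∪ {p | t ≤ dotA θ p} = univ := by
    ext p; simpa using le_total (dotA θ p) t
  have hi : {p : E2 | dotA θ p ≤ t} ∩ {p | t ≤ dotA θ p} = {p | dotA θ p = t} := by
    ext p; simp only [mem_inter_iff, mem_setOf_eq]
    constructor
    · rintro ⟨h1, h2⟩; linarith
    · intro h; constructor <;> linarith
  have := measure_union_add_inter {p : E2 | dotA θ p ≤ t} (measurableSet_ge' θ t) (μ := m)
  rw [hu, hi, lineNull' hm θ t, add_zero] at this
  exact this.symm

section Nice

variable (m : Measure E2) [IsFiniteMeasure m] (hm : m ≪ volume)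
  (hpos : ∀ θ t₁ t₂, t₁ < t₂ → 0 < m {p | t₁ < dotA θ p ∧ dotA θ p < t₂})

/-- Measure of a lower halfplane, as a real number. -/
def FF (θ t : ℝ) : ℝ := (m {p | dotA θ p ≤ t}).toReal

/-- Half the total mass. -/
def HH : ℝ := (m univ).toReal / 2

lemma FF_def (θ t : ℝ) : FF m θ t = (m {p | dotA θ p ≤ t}).toReal := rfl

lemma FF_mono (θ : ℝ) {t₁ t₂ : ℝ} (h : t₁ ≤ t₂) : FF m θ t₁ ≤ FF m θ t₂ :=
  ENNReal.toReal_mono (measure_ne_top m _)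
    (measure_mono (fun p hp => le_trans hp h))

include hm

lemma FF_contT (θ : ℝ) : Continuous (fun t => FF m θ t) := by
  rw [continuous_iff_continuousAt]
  intro t₀
  exact (ENNReal.tendsto_toReal (measure_ne_top m _)).comp
    (tendsto_halfplane m hm tendsto_const_nhds tendsto_id)

lemma FF_tendsto_theta (θ₀ t : ℝ) :
    Tendsto (fun θ' => FF m θ' t) (𝓝 θ₀) (𝓝 (FF m θ₀ t)) :=
  (ENNReal.tendsto_toReal (measure_ne_top m _)).comp
    (tendsto_halfplane m hm tendsto_id tendsto_const_nhds)

include hpos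

lemma FF_strict (θ : ℝ) {t₁ t₂ : ℝ} (h : t₁ < t₂) : FF m θ t₁ < FF m θ t₂ := by
  set A := {p : E2 | dotA θ p ≤ t₁} with hA
  set B := {p : E2 | t₁ < dotA θ p ∧ dotA θ p < t₂} with hB
  have hsub : A ∪ B ⊆ {p : E2 | dotA θ p ≤ t₂} := by
    rintro p (hp | hp)
    · exact le_trans hp h.le
    · exact hp.2.le
  have hdisj : Disjoint A B := by
    rw [Set.disjoint_left]
    rintro p hp ⟨h1, _⟩
    exact absurd hp (not_le.mpr h1)
  have hmeasB : MeasurableSet B :=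
    (measurableSet_lt measurable_const (continuous_dotA θ).measurable).inter
      (measurableSet_lt (continuous_dotA θ).measurable measurable_const)
  have hun : m (A ∪ B) = m A + m B := measure_union hdisj hmeasB
  have hBpos : 0 < (m B).toReal :=
    ENNReal.toReal_pos (hpos θ t₁ t₂ h).ne' (measure_ne_top m _)
  calc FF m θ t₁ < FF m θ t₁ + (m B).toReal := by linarith
  _ = (m (A ∪ B)).toReal := by
        rw [FF_def, hun, ENNReal.toReal_add (measure_ne_top m _) (measure_ne_top m _)]
  _ ≤ FF m θ t₂ := ENNReal.toReal_mono (measure_ne_top m _) (measure_mono hsub)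

lemma exists_unique_tau (θ : ℝ) :
    ∃! t : ℝ, (m {p | dotA θ p ≤ t}).toReal = (m univ).toReal / 2 := by
  have huniv_pos : 0 < (m univ).toReal := by
    have h01 := hpos 0 0 1 one_pos
    exact ENNReal.toReal_pos
      (lt_of_lt_of_le h01 (measure_mono (subset_univ _))).ne' (measure_ne_top m _)
  have hup : ∃ T : ℝ, HH m < FF m θ T := by
    have hmono : Monotone (fun n : ℕ => {p : E2 | dotA θ p ≤ (n:ℝ)}) := by
      intro a b hab p hp
      simp only [mem_setOf_eq] at hp ⊢
      exact le_trans hp (by exact_mod_cast hab)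
    have hUnion : ⋃ n : ℕ, {p : E2 | dotA θ p ≤ (n:ℝ)} = univ := by
      ext p
      simp only [mem_iUnion, mem_setOf_eq, mem_univ, iff_true]
      exact exists_nat_ge (dotA θ p)
    have h1 := tendsto_measure_iUnion_atTop (μ := m) hmono
    rw [hUnion] at h1
    have h2 : Tendsto (fun n : ℕ => FF m θ (n:ℝ)) atTop (𝓝 (m univ).toReal) :=
      (ENNReal.tendsto_toReal (measure_ne_top m _)).comp h1
    have hHlt : HH m < (m univ).toReal := by
      rw [HH]; linarith
    obtain ⟨n, hn⟩ := (h2.eventually_const_lt hHlt).exists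
    exact ⟨n, hn⟩
  have hdown : ∃ T : ℝ, FF m θ T < HH m := by
    have hanti : Antitone (fun n : ℕ => {p : E2 | dotA θ p ≤ -(n:ℝ)}) := by
      intro a b hab p hp
      simp only [mem_setOf_eq] at hp ⊢
      exact le_trans hp (neg_le_neg (by exact_mod_cast hab))
    have hInter : ⋂ n : ℕ, {p : E2 | dotA θ p ≤ -(n:ℝ)} = (∅ : Set E2) := by
      ext p
      simp only [mem_iInter, mem_setOf_eq, mem_empty_iff_false, iff_false, not_forall, not_le]
      obtain ⟨n, hn⟩ := exists_nat_ge (-(dotA θ p) + 1)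
      exact ⟨n, by linarith⟩
    have h1 := tendsto_measure_iInter_atTop (μ := m)
      (fun n => (measurableSet_le' θ _).nullMeasurableSet) hanti ⟨0, measure_ne_top m _⟩
    rw [hInter, measure_empty] at h1
    have h2 : Tendsto (fun n : ℕ => FF m θ (-(n:ℝ))) atTop (𝓝 (0:ℝ)) := by
      have h3 := (ENNReal.tendsto_toReal ENNReal.zero_ne_top).comp h1
      simpa [FF_def, Function.comp_def] using h3
    have hH0 : (0:ℝ) < HH m := by rw [HH]; linarith
    obtain ⟨n, hn⟩ := (h2.eventually_lt_const hH0).exists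
    exact ⟨-(n:ℝ), hn⟩
  obtain ⟨T₂, hT₂⟩ := hup
  obtain ⟨T₁, hT₁⟩ := hdown
  have hle : T₁ ≤ T₂ := by
    by_contra hcon
    push_neg at hcon
    have := FF_mono m θ hcon.le
    linarith
  obtain ⟨t, _, htt⟩ := intermediate_value_Icc hle ((FF_contT m hm θ).continuousOn)
    ⟨hT₁.le, hT₂.le⟩
  refine ⟨t, htt, fun t' ht' => ?_⟩
  by_contra hne
  have htt' : FF m θ t = HH m := htt
  have ht'' : FF m θ t' = HH m := ht'
  rcases lt_or_gt_of_ne hne with hltc | hgtc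
  · have := FF_strict m hm hpos θ hltc
    rw [htt', ht''] at this
    exact lt_irrefl _ this
  · have := FF_strict m hm hpos θ hgtc
    rw [htt', ht''] at this
    exact lt_irrefl _ this

def tau (θ : ℝ) : ℝ := (exists_unique_tau m hm hpos θ).exists.choose

lemma F_tau (θ : ℝ) :
    (m {p | dotA θ p ≤ tau m hm hpos θ}).toReal = (m univ).toReal / 2 :=
  (exists_unique_tau m hm hpos θ).exists.choose_spec

lemma tau_unique {θ t : ℝ} (h : (m {p | dotA θ p ≤ t}).toReal = (m univ).toReal / 2) :
    t = tau m hm hpos θ :=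
  (exists_unique_tau m hm hpos θ).unique h (F_tau m hm hpos θ)

lemma FF_tau' (θ : ℝ) : FF m θ (tau m hm hpos θ) = HH m := F_tau m hm hpos θ

lemma tau_lt_of {θ s : ℝ} (h : HH m < FF m θ s) : tau m hm hpos θ < s := by
  by_contra hcon
  push_neg at hcon
  have := FF_mono m θ hcon
  rw [FF_tau' m hm hpos θ] at this
  linarith

lemma lt_tau_of {θ s : ℝ} (h : FF m θ s < HH m) : s < tau m hm hpos θ := by
  by_contra hcon
  push_neg at hcon
  have := FF_mono m θ hcon
  rw [FF_tau' m hm hpos θ] at this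
  linarith

lemma tau_continuous : Continuous (tau m hm hpos) := by
  rw [continuous_iff_continuousAt]
  intro θ₀
  rw [ContinuousAt, Metric.tendsto_nhds]
  intro ε hε
  have hup : FF m θ₀ (tau m hm hpos θ₀) < FF m θ₀ (tau m hm hpos θ₀ + ε/2) :=
    FF_strict m hm hpos θ₀ (by linarith)
  have hdown : FF m θ₀ (tau m hm hpos θ₀ - ε/2) < FF m θ₀ (tau m hm hpos θ₀) :=
    FF_strict m hm hpos θ₀ (by linarith)
  rw [FF_tau' m hm hpos θ₀] at hup hdown
  have e1 : ∀ᶠ θ' in 𝓝 θ₀, HH m < FF m θ' (tau m hm hpos θ₀ + ε/2) :=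
    (FF_tendsto_theta m hm θ₀ _).eventually_const_lt hup
  have e2 : ∀ᶠ θ' in 𝓝 θ₀, FF m θ' (tau m hm hpos θ₀ - ε/2) < HH m :=
    (FF_tendsto_theta m hm θ₀ _).eventually_lt_const hdown
  filter_upwards [e1, e2] with θ' h1 h2
  have k1 : tau m hm hpos θ' < tau m hm hpos θ₀ + ε/2 := tau_lt_of m hm hpos h1
  have k2 : tau m hm hpos θ₀ - ε/2 < tau m hm hpos θ' := lt_tau_of m hm hpos h2
  rw [Real.dist_eq, abs_lt]
  constructor <;> linarith

lemma tau_add_pi (θ : ℝ) : tau m hm hpos (θ + π) = - tau m hm hpos θ := by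
  symm
  apply tau_unique m hm hpos
  have hset : {p : E2 | dotA (θ + π) p ≤ -(tau m hm hpos θ)}
      = {p | tau m hm hpos θ ≤ dotA θ p} := by
    ext p
    simp only [mem_setOf_eq, dotA_add_pi]
    constructor <;> intro h <;> linarith
  rw [hset]
  have hadd := measure_ge_add_le m hm θ (tau m hm hpos θ)
  have htr : (m {p | dotA θ p ≤ tau m hm hpos θ}).toReal
      + (m {p | tau m hm hpos θ ≤ dotA θ p}).toReal = (m univ).toReal := by
    rw [← ENNReal.toReal_add (measure_ne_top m _) (measure_ne_top m _), hadd]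
  have hF := F_tau m hm hpos θ
  linarith

/-- Main construction for measures positive on slabs: a regular six-fan of bisecting lines. -/
lemma nice_fan :
    ∃ θ ∈ Icc (0:ℝ) π, ∃ x y : ℝ, ∀ k : Fin 3,
      m {p | dotA (θ + k * (π/3)) p
          ≤ Real.cos (θ + k * (π/3)) * x + Real.sin (θ + k * (π/3)) * y} = m univ / 2 ∧
      m {p | Real.cos (θ + k * (π/3)) * x + Real.sin (θ + k * (π/3)) * y
          ≤ dotA (θ + k * (π/3)) p} = m univ / 2 := by
  set τ := tau m hm hpos with hτ
  have hτpi : ∀ θ, τ (θ + π) = - τ θ := tau_add_pi m hm hpos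
  have hτcont : Continuous τ := tau_continuous m hm hpos
  set D := Real.sin (π/3) with hD
  have hDpos : 0 < D := by
    rw [hD, Real.sin_pi_div_three]
    positivity
  have hDid : ∀ θ, Real.sin (θ+π/3) * Real.cos θ - Real.cos (θ+π/3) * Real.sin θ = D := by
    intro θ
    rw [← Real.sin_sub, hD]
    congr 1
    ring
  set xf : ℝ → ℝ := fun θ => (τ θ * Real.sin (θ+π/3) - τ (θ+π/3) * Real.sin θ) / D with hxf
  set yf : ℝ → ℝ := fun θ => (τ (θ+π/3) * Real.cos θ - τ θ * Real.cos (θ+π/3)) / D with hyf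
  have key0 : ∀ θ, Real.cos θ * xf θ + Real.sin θ * yf θ = τ θ := by
    intro θ
    have hrw : Real.cos θ * xf θ + Real.sin θ * yf θ
        = (Real.cos θ * (τ θ * Real.sin (θ+π/3) - τ (θ+π/3) * Real.sin θ)
          + Real.sin θ * (τ (θ+π/3) * Real.cos θ - τ θ * Real.cos (θ+π/3))) / D := by
      simp only [hxf, hyf]
      ring
    rw [hrw, div_eq_iff hDpos.ne']
    linear_combination (τ θ) * hDid θ
  have key1 : ∀ θ, Real.cos (θ+π/3) * xf θ + Real.sin (θ+π/3) * yf θ = τ (θ+π/3) := by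
    intro θ
    have hrw : Real.cos (θ+π/3) * xf θ + Real.sin (θ+π/3) * yf θ
        = (Real.cos (θ+π/3) * (τ θ * Real.sin (θ+π/3) - τ (θ+π/3) * Real.sin θ)
          + Real.sin (θ+π/3) * (τ (θ+π/3) * Real.cos θ - τ θ * Real.cos (θ+π/3))) / D := by
      simp only [hxf, hyf]
      ring
    rw [hrw, div_eq_iff hDpos.ne']
    linear_combination (τ (θ+π/3)) * hDid θ
  set ff : ℝ → ℝ := fun θ =>
    Real.cos (θ+2*(π/3)) * xf θ + Real.sin (θ+2*(π/3)) * yf θ - τ (θ+2*(π/3)) with hff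
  have hxfcont : Continuous xf := by
    simp only [hxf]
    exact ((hτcont.mul (Real.continuous_sin.comp (continuous_id.add continuous_const))).sub
      ((hτcont.comp (continuous_id.add continuous_const)).mul Real.continuous_sin)).div_const D
  have hyfcont : Continuous yf := by
    simp only [hyf]
    exact (((hτcont.comp (continuous_id.add continuous_const)).mul Real.continuous_cos).sub
      (hτcont.mul (Real.continuous_cos.comp (continuous_id.add continuous_const)))).div_const D
  have hffcont : Continuous ff := by
    simp only [hff]
    exact (((Real.continuous_cos.comp (continuous_id.add continuous_const)).mul hxfcont).add
      ((Real.continuous_sin.comp (continuous_id.add continuous_const)).mul hyfcont)).sub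
      (hτcont.comp (continuous_id.add continuous_const))
  have hxfpi : ∀ θ, xf (θ+π) = xf θ := by
    intro θ
    simp only [hxf]
    rw [show θ + π + π/3 = (θ + π/3) + π by ring, hτpi θ, hτpi (θ+π/3),
      Real.sin_add_pi, Real.sin_add_pi]
    ring
  have hyfpi : ∀ θ, yf (θ+π) = yf θ := by
    intro θ
    simp only [hyf]
    rw [show θ + π + π/3 = (θ + π/3) + π by ring, hτpi θ, hτpi (θ+π/3),
      Real.cos_add_pi, Real.cos_add_pi]
    ring
  have hffpi : ∀ θ, ff (θ+π) = - ff θ := by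
    intro θ
    simp only [hff]
    rw [show θ + π + 2*(π/3) = (θ + 2*(π/3)) + π by ring, hτpi (θ+2*(π/3)),
      Real.sin_add_pi, Real.cos_add_pi, hxfpi, hyfpi]
    ring
  have hivt : ∃ θ₀ ∈ Icc (0:ℝ) π, ff θ₀ = 0 := by
    have hfpi : ff π = - ff 0 := by
      rw [show π = 0 + π by ring, hffpi 0]
    rcases le_or_gt (ff 0) 0 with h0 | h0
    · obtain ⟨θ₀, hmem, heq⟩ := intermediate_value_Icc Real.pi_pos.le hffcont.continuousOn
        (show (0:ℝ) ∈ Icc (ff 0) (ff π) by rw [hfpi]; exact ⟨h0, by linarith⟩)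
      exact ⟨θ₀, hmem, heq⟩
    · obtain ⟨θ₀, hmem, heq⟩ := intermediate_value_Icc' Real.pi_pos.le hffcont.continuousOn
        (show (0:ℝ) ∈ Icc (ff π) (ff 0) by rw [hfpi]; exact ⟨by linarith, h0.le⟩)
      exact ⟨θ₀, hmem, heq⟩
  obtain ⟨θ₀, hθmem, hθeq⟩ := hivt
  refine ⟨θ₀, hθmem, xf θ₀, yf θ₀, ?_⟩
  have main : ∀ φ, Real.cos φ * xf θ₀ + Real.sin φ * yf θ₀ = τ φ →
      (m {p | dotA φ p ≤ Real.cos φ * xf θ₀ + Real.sin φ * yf θ₀} = m univ / 2 ∧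
       m {p | Real.cos φ * xf θ₀ + Real.sin φ * yf θ₀ ≤ dotA φ p} = m univ / 2) := by
    intro φ hid
    have h2top : m univ / 2 ≠ ⊤ :=
      (ENNReal.div_lt_top (measure_ne_top m univ) (by norm_num)).ne
    have hhalf : (m univ / 2).toReal = (m univ).toReal / 2 := by
      rw [ENNReal.toReal_div]
      norm_num
    constructor
    · rw [hid, ← ENNReal.toReal_eq_toReal_iff' (measure_ne_top m _) h2top, hhalf]
      exact F_tau m hm hpos φ
    · rw [hid, ← ENNReal.toReal_eq_toReal_iff' (measure_ne_top m _) h2top, hhalf]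
      have hadd := measure_ge_add_le m hm φ (τ φ)
      have htr := congrArg ENNReal.toReal hadd
      rw [ENNReal.toReal_add (measure_ne_top m _) (measure_ne_top m _)] at htr
      have hF := F_tau m hm hpos φ
      linarith
  have key2 : Real.cos (θ₀+2*(π/3)) * xf θ₀ + Real.sin (θ₀+2*(π/3)) * yf θ₀ = τ (θ₀+2*(π/3)) := by
    simp only [hff] at hθeq
    linarith
  intro k
  fin_cases k <;>
    simp only [Fin.isValue, Fin.val_zero, Fin.val_one, Nat.cast_zero, Nat.cast_one,
      Nat.cast_ofNat]
  · rw [show θ₀ + (0:ℝ) * (π/3) = θ₀ by ring]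
    exact main θ₀ (key0 θ₀)
  · rw [show θ₀ + (1:ℝ) * (π/3) = θ₀ + π/3 by ring]
    exact main (θ₀ + π/3) (key1 θ₀)
  · rw [show θ₀ + (2:ℝ) * (π/3) = θ₀ + 2*(π/3) by ring]
    exact main (θ₀ + 2*(π/3)) key2

end Nice

lemma gauss_integrable : Integrable (fun v : E2 => Real.exp (-‖v‖^2)) := by
  have h0 := GaussianFourier.integrable_cexp_neg_mul_sq_norm_add (V := E2) (b := 1)
    (by norm_num) 0 0
  have h1 := h0.norm
  refine h1.congr (Filter.Eventually.of_forall fun v => ?_)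
  simp [Complex.norm_exp]
  norm_cast

/-- A gaussian-like reference measure: finite, equivalent to volume. -/
def gm : Measure E2 := volume.withDensity (fun p => ENNReal.ofReal (Real.exp (-‖p‖^2)))

instance gm_finite : IsFiniteMeasure gm := by
  constructor
  rw [gm, withDensity_apply _ MeasurableSet.univ, Measure.restrict_univ]
  exact gauss_integrable.lintegral_lt_top

lemma gm_ac : gm ≪ volume := withDensity_absolutelyContinuous _ _

lemma volume_ac_gm : (volume : Measure E2) ≪ gm := by
  refine withDensity_absolutelyContinuous' ?_ ?_
  · exact (ENNReal.continuous_ofReal.comp (by fun_prop)).measurable.aemeasurable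
  · exact Filter.Eventually.of_forall fun p => (ENNReal.ofReal_pos.mpr (Real.exp_pos _)).ne'

instance : gm.IsOpenPosMeasure := volume_ac_gm.isOpenPosMeasure

lemma gm_slab_pos (θ t₁ t₂ : ℝ) (h : t₁ < t₂) :
    0 < gm {p | t₁ < dotA θ p ∧ dotA θ p < t₂} := by
  have hopen : IsOpen {p : E2 | t₁ < dotA θ p ∧ dotA θ p < t₂} := by
    have he : {p : E2 | t₁ < dotA θ p ∧ dotA θ p < t₂} = dotA θ ⁻¹' (Ioo t₁ t₂) := rfl
    rw [he]
    exact isOpen_Ioo.preimage (continuous_dotA θ)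
  refine hopen.measure_pos gm ⟨((t₁+t₂)/2) • vecA θ, ?_⟩
  constructor <;> rw [dotA_smul_vecA] <;> linarith

end

end SixFanAux

open SixFanAux Set Filter Topology ENNReal in
/-- For any finite absolutely continuous Borel measure on `ℝ²`, there is a regular
`6`-fan — three concurrent lines with successive angles `π/3` — each of whose three
lines bisects the measure (both closed half-planes of each line carry measure
`μ(ℝ²)/2`).  The lines pass through the common point `c` with unit normals at angles
`θ, θ + π/3, θ + 2π/3`. -/
theorem exists_regular_six_fan_of_bisecting_lines
    (μ : Measure (EuclideanSpace ℝ (Fin 2))) [IsFiniteMeasure μ] (hac : μ ≪ volume) :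
    ∃ (c : EuclideanSpace ℝ (Fin 2)) (θ : ℝ), ∀ k : Fin 3,
      μ {p | 0 ≤ ⟪((WithLp.equiv 2 (Fin 2 → ℝ)).symm
            ![Real.cos (θ + k * (π / 3)), Real.sin (θ + k * (π / 3))]), p - c⟫} = μ Set.univ / 2 ∧
      μ {p | ⟪((WithLp.equiv 2 (Fin 2 → ℝ)).symm
            ![Real.cos (θ + k * (π / 3)), Real.sin (θ + k * (π / 3))]), p - c⟫ ≤ 0} = μ Set.univ / 2 := by
  classical
  have hinner : ∀ (φ : ℝ) (c p : E2),
      ⟪((WithLp.equiv 2 (Fin 2 → ℝ)).symm ![Real.cos φ, Real.sin φ]), p - c⟫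
        = dotA φ p - dotA φ c := by
    intro φ c p
    have h1 : ((WithLp.equiv 2 (Fin 2 → ℝ)).symm ![Real.cos φ, Real.sin φ]) = vecA φ := rfl
    rw [h1, inner_vecA]
    simp only [dotA, PiLp.sub_apply]
    ring
  by_cases hzero : μ Set.univ = 0
  · have h1 : ∀ s : Set E2, μ s = 0 := fun s => measure_mono_null (subset_univ s) hzero
    exact ⟨0, 0, fun k => by rw [hzero, h1, h1]; simp⟩
  -- main case
  set M := (μ Set.univ).toReal with hMdef
  have hM : 0 < M := ENNReal.toReal_pos hzero (measure_ne_top μ _)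
  -- choice of a large radius R capturing most of the mass of μ
  have hRex : ∃ R : ℕ, (μ {p : E2 | (R:ℝ) < ‖p‖}).toReal < M/8 := by
    have hanti : Antitone (fun n : ℕ => {p : E2 | (n:ℝ) < ‖p‖}) := by
      intro a b hab p hp
      simp only [mem_setOf_eq] at hp ⊢
      exact lt_of_le_of_lt (by exact_mod_cast hab) hp
    have hInter : ⋂ n : ℕ, {p : E2 | (n:ℝ) < ‖p‖} = (∅ : Set E2) := by
      ext p
      simp only [mem_iInter, mem_setOf_eq, mem_empty_iff_false, iff_false, not_forall, not_lt]
      exact exists_nat_ge ‖p‖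
    have h1 := tendsto_measure_iInter_atTop (μ := μ)
      (fun n => ((isOpen_lt continuous_const continuous_norm).measurableSet).nullMeasurableSet)
      hanti ⟨0, measure_ne_top μ _⟩
    rw [hInter, measure_empty] at h1
    have h2 := (ENNReal.tendsto_toReal ENNReal.zero_ne_top).comp h1
    simp only [Function.comp_def] at h2
    obtain ⟨R, hR⟩ := (h2.eventually_lt_const (show (0:ℝ) < M/8 by linarith)).exists
    exact ⟨R, by simpa using hR⟩
  obtain ⟨R, hR⟩ := hRex
  -- vanishing weights
  set en : ℕ → ℝ≥0∞ := fun n => (((n+1 : ℕ) : ℝ≥0∞))⁻¹ with hen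
  have hen_ne_top : ∀ n, en n ≠ ⊤ := fun n =>
    ENNReal.inv_ne_top.mpr (by exact_mod_cast Nat.succ_ne_zero n)
  have hen_ne_zero : ∀ n, en n ≠ 0 := fun n =>
    ENNReal.inv_ne_zero.mpr (ENNReal.natCast_ne_top _)
  set eR : ℕ → ℝ := fun n => (((n+1:ℕ):ℝ))⁻¹ with heR
  have heR_eq : ∀ n, (en n).toReal = eR n := by
    intro n
    rw [hen, ENNReal.toReal_inv, ENNReal.toReal_natCast]
  have heRpos : ∀ n, 0 < eR n := fun n => by positivity
  have heR0 : Tendsto eR atTop (𝓝 0) :=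
    tendsto_inv_atTop_zero.comp (tendsto_natCast_atTop_atTop.comp (tendsto_add_atTop_nat 1))
  set V := (gm univ).toReal with hV
  -- the perturbed measures
  set mm : ℕ → Measure E2 := fun n => μ + en n • gm with hmm
  have hmm_apply : ∀ n (B : Set E2), mm n B = μ B + en n * gm B := by
    intro n B
    rw [hmm]
    simp [Measure.coe_add, Pi.add_apply, Measure.smul_apply, smul_eq_mul]
  have hfin1 : ∀ n (B : Set E2), en n * gm B ≠ ⊤ := fun n B =>
    ENNReal.mul_ne_top (hen_ne_top n) (measure_ne_top gm B)
  have hfinm : ∀ n, IsFiniteMeasure (mm n) := by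
    intro n
    constructor
    rw [hmm_apply]
    exact ENNReal.add_lt_top.mpr ⟨measure_lt_top μ _, (hfin1 n univ).lt_top⟩
  have hacm : ∀ n, mm n ≪ volume := by
    intro n
    intro s hs
    rw [hmm_apply, hac hs, gm_ac hs, mul_zero, add_zero]
  have hposm : ∀ n θ t₁ t₂, t₁ < t₂ → 0 < (mm n) {p | t₁ < dotA θ p ∧ dotA θ p < t₂} := by
    intro n θ t₁ t₂ h
    rw [hmm_apply]
    have h1 := gm_slab_pos θ t₁ t₂ h
    have h2 : 0 < en n * gm {p | t₁ < dotA θ p ∧ dotA θ p < t₂} :=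
      ENNReal.mul_pos (hen_ne_zero n) h1.ne'
    exact lt_of_lt_of_le h2 le_add_self
  choose θn hθmem xn yn hfan using fun n => @nice_fan (mm n) (hfinm n) (hacm n) (hposm n)
  -- arithmetic of the split measure
  have htoRealmm : ∀ n (B : Set E2), (mm n B).toReal = (μ B).toReal + eR n * (gm B).toReal := by
    intro n B
    rw [hmm_apply, ENNReal.toReal_add (measure_ne_top μ _) (hfin1 n B), ENNReal.toReal_mul,
      heR_eq]
  have hhalfR : ∀ n, ((mm n univ)/2).toReal = (M + eR n * V)/2 := by
    intro n
    rw [ENNReal.toReal_div, htoRealmm, hMdef, hV, ENNReal.toReal_ofNat]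
  have hsplit : ∀ n (B : Set E2), mm n B = mm n univ / 2 →
      (μ B).toReal + eR n * (gm B).toReal = (M + eR n * V)/2 := by
    intro n B h
    have h2 := congrArg ENNReal.toReal h
    rw [htoRealmm, hhalfR] at h2
    exact h2
  have hgmB : ∀ B : Set E2, (gm B).toReal ≤ V :=
    fun B => ENNReal.toReal_mono (measure_ne_top gm _) (measure_mono (subset_univ B))
  have hgmB0 : ∀ B : Set E2, 0 ≤ (gm B).toReal := fun B => ENNReal.toReal_nonneg
  -- bisecting lines of mm n pass near the origin
  have hsbound : ∀ n, eR n * V ≤ M/8 → ∀ φ x y : ℝ,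
      mm n {p | dotA φ p ≤ Real.cos φ * x + Real.sin φ * y} = mm n univ / 2 →
      mm n {p | Real.cos φ * x + Real.sin φ * y ≤ dotA φ p} = mm n univ / 2 →
      |Real.cos φ * x + Real.sin φ * y| ≤ (R:ℝ) := by
    intro n hn φ x y hA hB
    set s := Real.cos φ * x + Real.sin φ * y with hsdef
    have hA' := hsplit n _ hA
    have hB' := hsplit n _ hB
    have hAe : 3*M/8 ≤ (μ {p : E2 | dotA φ p ≤ s}).toReal := by
      have h1 : eR n * (gm {p : E2 | dotA φ p ≤ s}).toReal ≤ eR n * V :=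
        mul_le_mul_of_nonneg_left (hgmB _) (heRpos n).le
      have h2 := mul_nonneg (heRpos n).le (hgmB0 {p : E2 | dotA φ p ≤ s})
      linarith
    have hBe : 3*M/8 ≤ (μ {p : E2 | s ≤ dotA φ p}).toReal := by
      have h1 : eR n * (gm {p : E2 | s ≤ dotA φ p}).toReal ≤ eR n * V :=
        mul_le_mul_of_nonneg_left (hgmB _) (heRpos n).le
      have h2 := mul_nonneg (heRpos n).le (hgmB0 {p : E2 | s ≤ dotA φ p})
      linarith
    by_contra hcon
    rw [not_le, lt_abs] at hcon
    rcases hcon with hgt | hlt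
    · have hsub : {p : E2 | s ≤ dotA φ p} ⊆ {p : E2 | (R:ℝ) < ‖p‖} := by
        intro p hp
        simp only [mem_setOf_eq] at hp ⊢
        have h1 := abs_dotA_le φ p
        have h2 := le_abs_self (dotA φ p)
        linarith
      have hle := ENNReal.toReal_mono (measure_ne_top μ _) (measure_mono hsub)
      linarith
    · have hsub : {p : E2 | dotA φ p ≤ s} ⊆ {p : E2 | (R:ℝ) < ‖p‖} := by
        intro p hp
        simp only [mem_setOf_eq] at hp ⊢
        have h1 := abs_dotA_le φ p
        have h2 := neg_abs_le (dotA φ p)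
        linarith
      have hle := ENNReal.toReal_mono (measure_ne_top μ _) (measure_mono hsub)
      linarith
  -- from some index on, weights are small
  have heRV : Tendsto (fun n => eR n * V) atTop (𝓝 0) := by
    have h5 := heR0.mul_const V
    rw [zero_mul] at h5
    exact h5
  obtain ⟨N₀, hN₀⟩ := eventually_atTop.mp
    (heRV.eventually_le_const (show (0:ℝ) < M/8 by linarith))
  -- centers stay in a box
  have hDpos : (0:ℝ) < Real.sin (π/3) := by
    rw [Real.sin_pi_div_three]
    positivity
  have hDhalf : (1:ℝ)/2 ≤ Real.sin (π/3) := by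
    rw [Real.sin_pi_div_three]
    nlinarith [Real.sq_sqrt (show (0:ℝ) ≤ 3 by norm_num), Real.sqrt_nonneg 3]
  have habs_sub : ∀ a b : ℝ, |a - b| ≤ |a| + |b| := by
    intro a b
    rw [sub_eq_add_neg]
    exact (abs_add_le _ _).trans (by rw [abs_neg])
  have hbox : ∀ n, N₀ ≤ n → |xn n| ≤ 4*(R:ℝ) ∧ |yn n| ≤ 4*(R:ℝ) := by
    intro n hn
    have h0 := hfan n 0
    have h1 := hfan n 1
    simp only [show ((0 : Fin 3) : ℝ) = 0 from by norm_num,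
      show ((1 : Fin 3) : ℝ) = 1 from by norm_num, zero_mul, add_zero, one_mul] at h0 h1
    have hb0 := hsbound n (hN₀ n hn) _ _ _ h0.1 h0.2
    have hb1 := hsbound n (hN₀ n hn) _ _ _ h1.1 h1.2
    have hDid : Real.sin (θn n + π/3) * Real.cos (θn n)
        - Real.cos (θn n + π/3) * Real.sin (θn n) = Real.sin (π/3) := by
      rw [← Real.sin_sub]
      congr 1
      ring
    have hxeq : xn n * Real.sin (π/3)
        = (Real.cos (θn n) * xn n + Real.sin (θn n) * yn n) * Real.sin (θn n + π/3)
          - (Real.cos (θn n + π/3) * xn n + Real.sin (θn n + π/3) * yn n) * Real.sin (θn n) := by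
      linear_combination (-(xn n)) * hDid
    have hyeq : yn n * Real.sin (π/3)
        = (Real.cos (θn n + π/3) * xn n + Real.sin (θn n + π/3) * yn n) * Real.cos (θn n)
          - (Real.cos (θn n) * xn n + Real.sin (θn n) * yn n) * Real.cos (θn n + π/3) := by
      linear_combination (-(yn n)) * hDid
    have hRnn : (0:ℝ) ≤ (R:ℝ) := Nat.cast_nonneg R
    constructor
    · have h2 : |xn n| * Real.sin (π/3) ≤ 2*(R:ℝ) := by
        calc |xn n| * Real.sin (π/3) = |xn n * Real.sin (π/3)| := by
              rw [abs_mul, abs_of_pos hDpos]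
        _ = |(Real.cos (θn n) * xn n + Real.sin (θn n) * yn n) * Real.sin (θn n + π/3)
              - (Real.cos (θn n + π/3) * xn n + Real.sin (θn n + π/3) * yn n)
                * Real.sin (θn n)| := by rw [hxeq]
        _ ≤ |(Real.cos (θn n) * xn n + Real.sin (θn n) * yn n) * Real.sin (θn n + π/3)|
            + |(Real.cos (θn n + π/3) * xn n + Real.sin (θn n + π/3) * yn n)
                * Real.sin (θn n)| := habs_sub _ _
        _ ≤ (R:ℝ) * 1 + (R:ℝ) * 1 := by
              rw [abs_mul, abs_mul]
              exact add_le_add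
                (mul_le_mul hb0 (Real.abs_sin_le_one _) (abs_nonneg _) hRnn)
                (mul_le_mul hb1 (Real.abs_sin_le_one _) (abs_nonneg _) hRnn)
        _ = 2*(R:ℝ) := by ring
      nlinarith [abs_nonneg (xn n)]
    · have h2 : |yn n| * Real.sin (π/3) ≤ 2*(R:ℝ) := by
        calc |yn n| * Real.sin (π/3) = |yn n * Real.sin (π/3)| := by
              rw [abs_mul, abs_of_pos hDpos]
        _ = |(Real.cos (θn n + π/3) * xn n + Real.sin (θn n + π/3) * yn n) * Real.cos (θn n)
              - (Real.cos (θn n) * xn n + Real.sin (θn n) * yn n)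
                * Real.cos (θn n + π/3)| := by rw [hyeq]
        _ ≤ |(Real.cos (θn n + π/3) * xn n + Real.sin (θn n + π/3) * yn n) * Real.cos (θn n)|
            + |(Real.cos (θn n) * xn n + Real.sin (θn n) * yn n)
                * Real.cos (θn n + π/3)| := habs_sub _ _
        _ ≤ (R:ℝ) * 1 + (R:ℝ) * 1 := by
              rw [abs_mul, abs_mul]
              exact add_le_add
                (mul_le_mul hb1 (Real.abs_cos_le_one _) (abs_nonneg _) hRnn)
                (mul_le_mul hb0 (Real.abs_cos_le_one _) (abs_nonneg _) hRnn)
        _ = 2*(R:ℝ) := by ring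
      nlinarith [abs_nonneg (yn n)]
  -- extract a convergent subsequence
  set w : ℕ → ℝ × ℝ × ℝ := fun j => (θn (j+N₀), xn (j+N₀), yn (j+N₀)) with hw
  have hwK : ∀ j, w j ∈ (Icc (0:ℝ) π) ×ˢ
      ((Icc (-(4*(R:ℝ))) (4*(R:ℝ))) ×ˢ (Icc (-(4*(R:ℝ))) (4*(R:ℝ)))) := by
    intro j
    obtain ⟨hx4, hy4⟩ := hbox (j+N₀) (Nat.le_add_left _ _)
    simp only [hw, Set.mem_prod]
    exact ⟨hθmem _, abs_le.mp hx4, abs_le.mp hy4⟩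
  obtain ⟨a, _, σ, hσmono, hσtend⟩ :=
    ((isCompact_Icc.prod (isCompact_Icc.prod isCompact_Icc)).tendsto_subseq hwK)
  obtain ⟨θL, xL, yL⟩ := a
  have hθt : Tendsto (fun j => θn (σ j + N₀)) atTop (𝓝 θL) := by
    have := (continuous_fst.tendsto ((θL, xL, yL) : ℝ × ℝ × ℝ)).comp hσtend
    simpa [hw, Function.comp_def] using this
  have hxt : Tendsto (fun j => xn (σ j + N₀)) atTop (𝓝 xL) := by
    have := (continuous_fst.tendsto ((xL, yL) : ℝ × ℝ)).comp
      ((continuous_snd.tendsto ((θL, xL, yL) : ℝ × ℝ × ℝ)).comp hσtend)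
    simpa [hw, Function.comp_def] using this
  have hyt : Tendsto (fun j => yn (σ j + N₀)) atTop (𝓝 yL) := by
    have := (continuous_snd.tendsto ((xL, yL) : ℝ × ℝ)).comp
      ((continuous_snd.tendsto ((θL, xL, yL) : ℝ × ℝ × ℝ)).comp hσtend)
    simpa [hw, Function.comp_def] using this
  have heRσ : Tendsto (fun j => eR (σ j + N₀)) atTop (𝓝 0) :=
    heR0.comp ((tendsto_add_atTop_nat N₀).comp hσmono.tendsto_atTop)
  -- the limit fan
  refine ⟨(WithLp.equiv 2 (Fin 2 → ℝ)).symm ![xL, yL], θL, fun k => ?_⟩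
  set φL := θL + (k:ℝ) * (π/3) with hφL
  have hc0 : dotA φL ((WithLp.equiv 2 (Fin 2 → ℝ)).symm ![xL, yL])
      = Real.cos φL * xL + Real.sin φL * yL := by
    simp [dotA, WithLp.equiv_symm_apply, PiLp.toLp_apply]
  have hset1 : {p : E2 | 0 ≤ ⟪((WithLp.equiv 2 (Fin 2 → ℝ)).symm
        ![Real.cos φL, Real.sin φL]), p - (WithLp.equiv 2 (Fin 2 → ℝ)).symm ![xL, yL]⟫}
      = {p : E2 | Real.cos φL * xL + Real.sin φL * yL ≤ dotA φL p} := by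
    ext p
    rw [mem_setOf_eq, mem_setOf_eq, hinner, hc0]
    constructor <;> intro h <;> linarith
  have hset2 : {p : E2 | ⟪((WithLp.equiv 2 (Fin 2 → ℝ)).symm
        ![Real.cos φL, Real.sin φL]), p - (WithLp.equiv 2 (Fin 2 → ℝ)).symm ![xL, yL]⟫ ≤ 0}
      = {p : E2 | dotA φL p ≤ Real.cos φL * xL + Real.sin φL * yL} := by
    ext p
    rw [mem_setOf_eq, mem_setOf_eq, hinner, hc0]
    constructor <;> intro h <;> linarith
  set Θ : ℕ → ℝ := fun j => θn (σ j + N₀) + (k:ℝ) * (π/3) with hΘ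
  have hΘt : Tendsto Θ atTop (𝓝 φL) := hθt.add_const _
  set S : ℕ → ℝ := fun j =>
    Real.cos (Θ j) * xn (σ j + N₀) + Real.sin (Θ j) * yn (σ j + N₀) with hS
  have hSt : Tendsto S atTop (𝓝 (Real.cos φL * xL + Real.sin φL * yL)) :=
    (((Real.continuous_cos.tendsto φL).comp hΘt).mul hxt).add
      (((Real.continuous_sin.tendsto φL).comp hΘt).mul hyt)
  have hμhalf_ne : μ Set.univ / 2 ≠ ⊤ :=
    (ENNReal.div_lt_top (measure_ne_top μ _) (by norm_num)).ne
  have key : ∀ (A : ℕ → Set E2) (AL : Set E2),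
      Tendsto (fun j => μ (A j)) atTop (𝓝 (μ AL)) →
      (∀ j, mm (σ j + N₀) (A j) = mm (σ j + N₀) univ / 2) →
      μ AL = μ Set.univ / 2 := by
    intro A AL hlim heq
    have h1 : Tendsto (fun j => (μ (A j)).toReal) atTop (𝓝 ((μ AL).toReal)) :=
      (ENNReal.tendsto_toReal (measure_ne_top μ _)).comp hlim
    have h2 : Tendsto (fun j => (μ (A j)).toReal) atTop (𝓝 (M/2)) := by
      have hlow : ∀ j, (M + eR (σ j + N₀) * V)/2 - eR (σ j + N₀) * V ≤ (μ (A j)).toReal := by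
        intro j
        have hs := hsplit _ _ (heq j)
        have h3 : eR (σ j + N₀) * (gm (A j)).toReal ≤ eR (σ j + N₀) * V :=
          mul_le_mul_of_nonneg_left (hgmB _) (heRpos _).le
        linarith
      have hhigh : ∀ j, (μ (A j)).toReal ≤ (M + eR (σ j + N₀) * V)/2 := by
        intro j
        have hs := hsplit _ _ (heq j)
        have h3 : 0 ≤ eR (σ j + N₀) * (gm (A j)).toReal :=
          mul_nonneg (heRpos _).le (hgmB0 _)
        linarith
      have h4 := heRσ.mul_const V
      have hl : Tendsto (fun j => (M + eR (σ j + N₀) * V)/2 - eR (σ j + N₀) * V)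
          atTop (𝓝 (M/2)) := by
        have h5 := ((tendsto_const_nhds (x := M)).add h4).div_const 2 |>.sub h4
        simpa using h5
      have hh : Tendsto (fun j => (M + eR (σ j + N₀) * V)/2) atTop (𝓝 (M/2)) := by
        have h5 := ((tendsto_const_nhds (x := M)).add h4).div_const 2
        simpa using h5
      exact tendsto_of_tendsto_of_tendsto_of_le_of_le hl hh hlow hhigh
    have h6 := tendsto_nhds_unique h1 h2
    rw [← ENNReal.toReal_eq_toReal_iff' (measure_ne_top μ _) hμhalf_ne, h6, ENNReal.toReal_div,
      hMdef, ENNReal.toReal_ofNat]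
  constructor
  · rw [hset1]
    exact key (fun j => {p : E2 | S j ≤ dotA (Θ j) p}) _
      (tendsto_halfplane_ge μ hac hΘt hSt)
      (fun j => (hfan (σ j + N₀) k).2)
  · rw [hset2]
    exact key (fun j => {p : E2 | dotA (Θ j) p ≤ S j}) _
      (tendsto_halfplane μ hac hΘt hSt)
      (fun j => (hfan (σ j + N₀) k).1)
end
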